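/- arXiv:2009.05182 — 2 statements merged into one kernel-verified Lean document; each statement's English description precedes it below -/
import Mathlib

section
/- Let $u \in L^2([0,T];\mathbb{R}^m)$, let $r \in (0,T)$ be a Lebesgue point of $u$, and let $(u_k)_{k\in\mathbb{N}} \subseteq L^2([0,T];\mathbb{R}^m)$ converge to $u$ strongly in $L^2$. Suppose the set of discontinuities of each $u_k$ has Lebesgue measure zero and $r$ avoids all of them. Then there exists a sequence $(r_k)_{k\in\mathbb{N}} \subseteq (0,r)$ such that each $r_k$ is a Lebesgue point of $u_k$, $r_k \to r$, and $u_k(r_k) \to u(r)$ as $k \to \infty$. -/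
open Set Filter Topology MeasureTheory

/-- `t` is a Lebesgue point of `u`: `(1/η) ∫_t^{t+η} ‖u(s) - u(t)‖ ds → 0` as `η → 0`. -/
def IsLebesguePoint {m : ℕ} (u : ℝ → EuclideanSpace ℝ (Fin m)) (t : ℝ) : Prop :=
  Tendsto (fun η : ℝ => η⁻¹ * ∫ s in t..(t + η), ‖u s - u t‖) (𝓝[≠] 0) (𝓝 0)

lemma lebesgue_of_contAt {m : ℕ} (T : ℝ) (f : ℝ → EuclideanSpace ℝ (Fin m)) (t : ℝ)
    (hmeas : AEStronglyMeasurable f (volume.restrict (Icc (0:ℝ) T)))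
    (ht : t ∈ Ioo 0 T) (hc : ContinuousAt f t) :
    Tendsto (fun η : ℝ => η⁻¹ * ∫ s in t..(t + η), ‖f s - f t‖) (𝓝[≠] 0) (𝓝 0) := by
  rw [Metric.tendsto_nhdsWithin_nhds]
  intro ε hε
  obtain ⟨δ₀, hδ₀, hδ⟩ := Metric.continuousAt_iff.mp hc (ε/2) (by positivity)
  refine ⟨min δ₀ (min t (T - t)), by simp [hδ₀, ht.1, ht.2, sub_pos], fun {η} hη hηδ => ?_⟩
  have hη0 : η ≠ 0 := hη
  simp only [Real.dist_eq, sub_zero, lt_min_iff] at hηδ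
  obtain ⟨h1, h2, h3⟩ := hηδ
  obtain ⟨h1a, h1b⟩ := abs_lt.mp h1
  obtain ⟨h2a, h2b⟩ := abs_lt.mp h2
  obtain ⟨h3a, h3b⟩ := abs_lt.mp h3
  have hsub : uIcc t (t + η) ⊆ Icc 0 T := by
    intro s hs
    rcases mem_uIcc.mp hs with ⟨ha, hb⟩ | ⟨ha, hb⟩ <;> constructor <;> linarith [ht.1, ht.2]
  have hclose : ∀ s ∈ uIcc t (t + η), dist s t < δ₀ := by
    intro s hs
    rw [Real.dist_eq, abs_lt]
    rcases mem_uIcc.mp hs with ⟨ha, hb⟩ | ⟨ha, hb⟩ <;> constructor <;> linarith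
  have hb : ∀ s ∈ uIoc t (t + η), ‖(fun s => ‖f s - f t‖) s‖ ≤ ε/2 := by
    intro s hs
    rw [norm_norm, ← dist_eq_norm]
    exact (hδ (hclose s (uIoc_subset_uIcc hs))).le
  have hint : IntervalIntegrable (fun s => ‖f s - f t‖) volume t (t + η) := by
    rw [intervalIntegrable_iff]
    have hmeas' : AEStronglyMeasurable (fun s => ‖f s - f t‖) (volume.restrict (uIoc t (t+η))) := by
      have h0 := (hmeas.sub (aestronglyMeasurable_const (b := f t))).norm
      have h2 : volume.restrict (uIoc t (t+η)) = (volume.restrict (Icc (0:ℝ) T)).restrict (uIoc t (t+η)) := by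
        rw [Measure.restrict_restrict measurableSet_uIoc]
        congr 1
        exact (inter_eq_left.mpr (uIoc_subset_uIcc.trans hsub)).symm
      rw [h2]
      exact h0.restrict
    refine Integrable.mono' (g := fun _ => ε/2) ?_ hmeas' ?_
    · refine (integrableOn_const_iff).mpr (Or.inr ?_)
      calc volume (uIoc t (t+η)) ≤ volume (Icc (0:ℝ) T) :=
            measure_mono (uIoc_subset_uIcc.trans hsub)
        _ < ⊤ := by rw [Real.volume_Icc]; exact ENNReal.ofReal_lt_top
    · rw [ae_restrict_iff' measurableSet_uIoc]
      filter_upwards with s hs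
      exact hb s hs
  have hbound := intervalIntegral.norm_integral_le_of_norm_le_const hb
  rw [Real.dist_eq, sub_zero, abs_mul, abs_inv]
  calc |η|⁻¹ * |∫ s in t..(t + η), ‖f s - f t‖|
      ≤ |η|⁻¹ * (ε/2 * |t + η - t|) := by
        gcongr
        exact hbound
    _ = ε/2 := by
        rw [add_sub_cancel_left]
        rw [mul_comm (ε/2)]
        rw [← mul_assoc, inv_mul_cancel₀ (abs_ne_zero.mpr hη0), one_mul]
    _ < ε := by linarith

/-- If `u_k → u` strongly in `L²([0,T];ℝ^m)`, `r ∈ (0,T)` is a Lebesgue point of `u`,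
each `u_k` has a negligible set of discontinuities and is continuous at `r`, then there are
Lebesgue points `r_k ∈ (0,r)` of `u_k` with `r_k → r` and `u_k(r_k) → u(r)`. -/
theorem stmt_4 (m : ℕ) (T : ℝ) (u : ℝ → EuclideanSpace ℝ (Fin m))
    (uk : ℕ → ℝ → EuclideanSpace ℝ (Fin m)) (r : ℝ) (hr : r ∈ Ioo 0 T)
    (hu2 : MemLp u 2 (volume.restrict (Icc (0:ℝ) T)))
    (huk2 : ∀ k, MemLp (uk k) 2 (volume.restrict (Icc (0:ℝ) T)))
    (hleb : IsLebesguePoint u r)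
    (hconv : Tendsto (fun k => ∫ s in Icc (0:ℝ) T, ‖uk k s - u s‖ ^ 2) atTop (𝓝 0))
    (hdisc : ∀ k, volume {t : ℝ | ¬ ContinuousAt (uk k) t} = 0)
    (hrcont : ∀ k, ContinuousAt (uk k) r) :
    ∃ rk : ℕ → ℝ, (∀ k, rk k ∈ Ioo 0 r) ∧ (∀ k, IsLebesguePoint (uk k) (rk k)) ∧
      Tendsto rk atTop (𝓝 r) ∧ Tendsto (fun k => uk k (rk k)) atTop (𝓝 (u r)) := by
  have hleb' : Tendsto (fun η : ℝ => η⁻¹ * ∫ s in r..(r + η), ‖u s - u r‖) (𝓝[≠] 0) (𝓝 0) := hleb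
  set a : ℕ → ℝ := fun k => ∫ s in Icc (0:ℝ) T, ‖uk k s - u s‖ ^ 2 with ha_def
  have ha0 : ∀ k, 0 ≤ a k := fun k => integral_nonneg (fun s => by positivity)
  have hεk : Tendsto (fun k : ℕ => 1/((k:ℝ)+1)) atTop (𝓝 0) :=
    tendsto_one_div_add_atTop_nhds_zero_nat
  have hεkpos : ∀ k : ℕ, (0:ℝ) < 1/((k:ℝ)+1) := fun k => by positivity
  set η : ℕ → ℝ := fun k => min (r/2) (max (Real.sqrt (a k)) (1/((k:ℝ)+1))) with hη_def
  have hηpos : ∀ k, 0 < η k := fun k =>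
    lt_min (by linarith [hr.1]) (lt_max_of_lt_right (hεkpos k))
  have hηler : ∀ k, η k ≤ r/2 := fun k => min_le_left _ _
  have hsqrt_to0 : Tendsto (fun k => Real.sqrt (a k)) atTop (𝓝 0) := by
    have h := (Real.continuous_sqrt.tendsto 0).comp hconv
    simpa [Function.comp_def] using h
  have hη0 : Tendsto η atTop (𝓝 0) := by
    have hmax : Tendsto (fun k => max (Real.sqrt (a k)) (1/((k:ℝ)+1))) atTop (𝓝 0) := by
      simpa using hsqrt_to0.max hεk
    exact tendsto_of_tendsto_of_tendsto_of_le_of_le tendsto_const_nhds hmax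
      (fun k => (hηpos k).le) (fun k => min_le_right _ _)
  have hIsub : ∀ k, Ioc (r - η k) r ⊆ Icc 0 T := by
    intro k s hs
    have h1 := hηler k
    exact ⟨by linarith [hs.1, hr.1], le_trans hs.2 hr.2.le⟩
  -- integrability
  have hu1 : IntegrableOn u (Icc 0 T) volume := hu2.integrable one_le_two
  have huk1 : ∀ k, IntegrableOn (uk k) (Icc 0 T) volume := fun k => (huk2 k).integrable one_le_two
  have hIfin : ∀ k, volume (Ioc (r - η k) r) < ⊤ := fun k => by
    rw [Real.volume_Ioc]; exact ENNReal.ofReal_lt_top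
  have hintU : ∀ k, IntegrableOn (fun s => ‖u s - u r‖) (Ioc (r - η k) r) volume := fun k =>
    ((hu1.mono_set (hIsub k)).sub ((integrableOn_const_iff).mpr (Or.inr (hIfin k)))).norm
  have hintUK : ∀ k, IntegrableOn (fun s => ‖uk k s - u r‖) (Ioc (r - η k) r) volume := fun k =>
    (((huk1 k).mono_set (hIsub k)).sub ((integrableOn_const_iff).mpr (Or.inr (hIfin k)))).norm
  have hintD : ∀ k, IntegrableOn (fun s => ‖uk k s - u s‖) (Ioc (r - η k) r) volume := fun k =>
    (((huk1 k).mono_set (hIsub k)).sub (hu1.mono_set (hIsub k))).norm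
  have hd2 : ∀ k, IntegrableOn (fun s => ‖uk k s - u s‖ ^ 2) (Icc (0:ℝ) T) volume := by
    intro k
    have h := ((huk2 k).sub hu2).integrable_norm_rpow two_ne_zero (by norm_num)
    refine h.congr (Eventually.of_forall fun s => ?_)
    show ‖(uk k - u) s‖ ^ ((2:ENNReal).toReal) = ‖uk k s - u s‖ ^ (2:ℕ)
    rw [show ((2:ENNReal).toReal) = ((2:ℕ):ℝ) by norm_num, Real.rpow_natCast, Pi.sub_apply]
  have hsub2 : ∀ k, ∫ s in Ioc (r - η k) r, ‖uk k s - u s‖ ^ 2 ≤ a k := fun k =>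
    setIntegral_mono_set (hd2 k) (Eventually.of_forall fun s => by positivity)
      ((hIsub k).eventuallyLE)
  -- the volume of I k
  have hvolI : ∀ k, (volume (Ioc (r - η k) r)).toReal = η k := by
    intro k
    rw [Real.volume_Ioc, ENNReal.toReal_ofReal (by linarith [hηpos k])]
    ring
  -- Cauchy-Schwarz-ish bound
  set c : ℕ → ℝ := fun k => Real.sqrt (a k / η k) + 1/((k:ℝ)+1) with hc_def
  have hcpos : ∀ k, 0 < c k := fun k => by
    have := Real.sqrt_nonneg (a k / η k); have := hεkpos k; positivity
  have ht1 : ∀ k, (η k)⁻¹ * ∫ s in Ioc (r - η k) r, ‖uk k s - u s‖ ≤ c k := by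
    intro k
    have hc := hcpos k
    have hη := hηpos k
    have hpt : ∀ s, ‖uk k s - u s‖ ≤ (c k + ‖uk k s - u s‖ ^ 2 / c k)/2 := by
      intro s
      have key : 2 * c k * ‖uk k s - u s‖ ≤ c k ^ 2 + ‖uk k s - u s‖ ^ 2 := by
        nlinarith [sq_nonneg (‖uk k s - u s‖ - c k)]
      rw [le_div_iff₀ (by norm_num : (0:ℝ) < 2)]
      rw [← sub_nonneg]
      have : c k + ‖uk k s - u s‖ ^ 2 / c k - ‖uk k s - u s‖ * 2
          = (c k ^ 2 + ‖uk k s - u s‖ ^ 2 - 2 * c k * ‖uk k s - u s‖) / c k := by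
        field_simp
      rw [this]
      apply div_nonneg _ hc.le
      linarith
    have hstep : ∫ s in Ioc (r - η k) r, ‖uk k s - u s‖
        ≤ ∫ s in Ioc (r - η k) r, (c k + ‖uk k s - u s‖ ^ 2 / c k)/2 := by
      refine integral_mono (hintD k) ?_ hpt
      exact ((integrable_const _).add (((hd2 k).mono_set (hIsub k)).div_const _)).div_const 2
    have heval : ∫ s in Ioc (r - η k) r, (c k + ‖uk k s - u s‖ ^ 2 / c k)/2
        = (c k * η k + (∫ s in Ioc (r - η k) r, ‖uk k s - u s‖ ^ 2) / c k)/2 := by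
      rw [integral_div, integral_add (integrable_const _)
        (((hd2 k).mono_set (hIsub k)).div_const _), integral_div, integral_const, measureReal_def, Measure.restrict_apply_univ, hvolI k,
        smul_eq_mul, mul_comm]
    have ha_le : a k / η k ≤ c k ^ 2 := by
      have h1 : Real.sqrt (a k / η k) ≤ c k := by
        simp only [hc_def]
        have := (hεkpos k).le
        linarith
      calc a k / η k = Real.sqrt (a k / η k) ^ 2 :=
            (Real.sq_sqrt (div_nonneg (ha0 k) hη.le)).symm
        _ ≤ c k ^ 2 := by gcongr
    have ha_le2 : a k ≤ c k ^ 2 * η k := by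
      rw [div_le_iff₀ hη] at ha_le; linarith
    calc (η k)⁻¹ * ∫ s in Ioc (r - η k) r, ‖uk k s - u s‖
        ≤ (η k)⁻¹ * ((c k * η k + (∫ s in Ioc (r - η k) r, ‖uk k s - u s‖ ^ 2) / c k)/2) := by
          rw [← heval]; gcongr
      _ ≤ (η k)⁻¹ * ((c k * η k + (c k ^ 2 * η k) / c k)/2) := by
          gcongr
          exact le_trans (hsub2 k) ha_le2
      _ = c k := by field_simp; ring
  have hc0 : Tendsto c atTop (𝓝 0) := by
    have hbnd : ∀ k, a k / η k ≤ max (a k * (2/r)) (Real.sqrt (a k)) := by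
      intro k
      rcases le_total (r/2) (max (Real.sqrt (a k)) (1/((k:ℝ)+1))) with h | h
      · have hη : η k = r/2 := min_eq_left h
        rw [hη]
        refine le_max_of_le_left (le_of_eq ?_)
        rw [div_div_eq_mul_div, mul_div_assoc]
      · have hη : η k = max (Real.sqrt (a k)) (1/((k:ℝ)+1)) := min_eq_right h
        refine le_max_of_le_right ?_
        rcases eq_or_lt_of_le (Real.sqrt_nonneg (a k)) with h0 | h0
        · have ha : a k = 0 := by
            by_contra hne
            have : 0 < a k := lt_of_le_of_ne (ha0 k) (Ne.symm hne)
            have := Real.sqrt_pos.mpr this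
            rw [← h0] at this; exact lt_irrefl 0 this
          rw [ha]; simp [Real.sqrt_nonneg]
        · have hsη : Real.sqrt (a k) ≤ η k := hη ▸ le_max_left _ _
          calc a k / η k ≤ a k / Real.sqrt (a k) := by gcongr
            _ = Real.sqrt (a k) := Real.div_sqrt
    have haη : Tendsto (fun k => a k / η k) atTop (𝓝 0) := by
      have hM : Tendsto (fun k => max (a k * (2/r)) (Real.sqrt (a k))) atTop (𝓝 0) := by
        have h1 : Tendsto (fun k => a k * (2/r)) atTop (𝓝 0) := by
          simpa using hconv.mul_const (2/r)
        simpa using h1.max hsqrt_to0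
      exact tendsto_of_tendsto_of_tendsto_of_le_of_le tendsto_const_nhds hM
        (fun k => div_nonneg (ha0 k) (hηpos k).le) hbnd
    have hs : Tendsto (fun k => Real.sqrt (a k / η k)) atTop (𝓝 0) := by
      have := (Real.continuous_sqrt.tendsto 0).comp haη
      simpa [Function.comp_def] using this
    simpa [hc_def, one_div] using hs.add hεk
  -- the Lebesgue-point term
  set cL : ℕ → ℝ := fun k => (η k)⁻¹ * ∫ s in Ioc (r - η k) r, ‖u s - u r‖ with hcL_def
  have hcL0 : Tendsto cL atTop (𝓝 0) := by
    have hne : Tendsto (fun k => -(η k)) atTop (𝓝[≠] 0) := by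
      refine tendsto_nhdsWithin_of_tendsto_nhds_of_eventually_within _ ?_
        (Eventually.of_forall fun k => neg_ne_zero.mpr (hηpos k).ne')
      simpa using hη0.neg
    have hcomp := hleb'.comp hne
    have heq : (fun k => (-(η k))⁻¹ * ∫ s in r..(r + -(η k)), ‖u s - u r‖) = cL := by
      funext k
      have h1 : r + -(η k) = r - η k := by ring
      rw [h1, intervalIntegral.integral_symm,
        intervalIntegral.integral_of_le (by linarith [hηpos k] : r - η k ≤ r)]
      simp only [hcL_def]
      rw [inv_neg, neg_mul_neg]
    rw [← heq]
    exact hcomp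
  -- the averaged quantity b k
  set b : ℕ → ℝ := fun k => (η k)⁻¹ * ∫ s in Ioc (r - η k) r, ‖uk k s - u r‖ with hb_def
  have hb_nonneg : ∀ k, 0 ≤ b k := fun k =>
    mul_nonneg (inv_nonneg.mpr (hηpos k).le) (integral_nonneg fun s => norm_nonneg _)
  have hb_le : ∀ k, b k ≤ c k + cL k := by
    intro k
    have htri : ∫ s in Ioc (r - η k) r, ‖uk k s - u r‖
        ≤ ∫ s in Ioc (r - η k) r, (‖uk k s - u s‖ + ‖u s - u r‖) := by
      refine integral_mono (hintUK k) ((hintD k).add (hintU k)) fun s => ?_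
      exact norm_sub_le_norm_sub_add_norm_sub _ _ _
    rw [integral_add (hintD k) (hintU k)] at htri
    calc b k ≤ (η k)⁻¹ * ((∫ s in Ioc (r - η k) r, ‖uk k s - u s‖)
          + ∫ s in Ioc (r - η k) r, ‖u s - u r‖) := by
          simp only [hb_def]
          gcongr
          exact inv_nonneg.mpr (hηpos k).le
      _ = (η k)⁻¹ * (∫ s in Ioc (r - η k) r, ‖uk k s - u s‖) + cL k := by
          simp only [hcL_def]; ring
      _ ≤ c k + cL k := by gcongr ?_ + _; exact ht1 k
  have hb0 : Tendsto b atTop (𝓝 0) := by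
    refine tendsto_of_tendsto_of_tendsto_of_le_of_le tendsto_const_nhds ?_ hb_nonneg hb_le
    simpa using hc0.add hcL0
  -- choose the points
  have hex : ∀ k, ∃ s, s ∈ Ioo (r - η k) r ∧ ContinuousAt (uk k) s ∧
      ‖uk k s - u r‖ ≤ b k + 1/((k:ℝ)+1) := by
    intro k
    by_contra hcon
    push_neg at hcon
    have hae : ∀ᵐ s ∂(volume.restrict (Ioc (r - η k) r)),
        b k + 1/((k:ℝ)+1) ≤ ‖uk k s - u r‖ := by
      have h1 : ∀ᵐ s ∂volume, ContinuousAt (uk k) s := by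
        rw [ae_iff]; exact hdisc k
      have h2 : ∀ᵐ s ∂volume, s ≠ r := by
        rw [ae_iff]
        simpa using (Real.volume_singleton (a := r))
      filter_upwards [ae_restrict_of_ae h1, ae_restrict_of_ae h2,
        ae_restrict_mem measurableSet_Ioc] with s hcont hne hmem
      exact (hcon s ⟨hmem.1, lt_of_le_of_ne hmem.2 hne⟩ hcont).le
    have hmono := integral_mono_ae (integrable_const _) (hintUK k) hae
    rw [integral_const, measureReal_def, Measure.restrict_apply_univ, hvolI k, smul_eq_mul] at hmono
    have hη := hηpos k
    have : b k + 1/((k:ℝ)+1) ≤ b k := by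
      rw [hb_def]
      calc b k + 1/((k:ℝ)+1) = (η k)⁻¹ * (η k * (b k + 1/((k:ℝ)+1))) := by
            field_simp
        _ ≤ (η k)⁻¹ * ∫ s in Ioc (r - η k) r, ‖uk k s - u r‖ := by gcongr
    linarith [hεkpos k]
  choose rk hrk1 hrk2 hrk3 using hex
  have hrkIoo : ∀ k, rk k ∈ Ioo 0 r := by
    intro k
    refine ⟨lt_of_le_of_lt ?_ (hrk1 k).1, (hrk1 k).2⟩
    have := hηler k; linarith [hr.1]
  refine ⟨rk, hrkIoo, fun k => lebesgue_of_contAt T (uk k) (rk k) (huk2 k).1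
    ⟨(hrkIoo k).1, lt_trans (hrkIoo k).2 hr.2⟩ (hrk2 k), ?_, ?_⟩
  · refine tendsto_of_tendsto_of_tendsto_of_le_of_le (g := fun k => r - η k) ?_
      tendsto_const_nhds (fun k => (hrk1 k).1.le) (fun k => (hrk1 k).2.le)
    simpa using tendsto_const_nhds.sub hη0
  · rw [tendsto_iff_dist_tendsto_zero]
    refine tendsto_of_tendsto_of_tendsto_of_le_of_le
      (h := fun k => b k + 1/((k:ℝ)+1)) tendsto_const_nhds ?_
      (fun k => dist_nonneg) (fun k => ?_)
    · simpa using hb0.add hεk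
    · rw [dist_eq_norm]; exact hrk3 k
end

section
/- Let $(X_k)_{k\in\mathbb{N}}$ and $X$ be random vectors in $\mathbb{R}^n$ on a probability space, let $g : \mathbb{R}^n \to \mathbb{R}^q$ be $C^1$ with $g$ and $\frac{\partial g}{\partial x}$ globally bounded and $g$ globally Lipschitz, and let $(Y_k)_{k\in\mathbb{N}}$ be random vectors in $\mathbb{R}^n$. Suppose $\mathbb{E}[\|X_k - X\|^2] \to 0$, $\mathbb{E}[\|Y_k - X\|^2] \to 0$, and for every $k$, $\mathbb{E}\big[g(X_k) + \frac{\partial g}{\partial x}(X_k)(Y_{k+1} - X_k)\big] = 0$. Then $\mathbb{E}[g(X)] = 0$. -/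
open Set Filter Topology MeasureTheory

lemma tendsto_int_norm_of_sq {Ω : Type*} [MeasurableSpace Ω] (P : Measure Ω)
    [IsProbabilityMeasure P] {E : Type*} [NormedAddCommGroup E] (f : ℕ → Ω → E)
    (hf : ∀ k, MemLp (f k) 2 P)
    (h : Tendsto (fun k => ∫ ω, ‖f k ω‖ ^ 2 ∂P) atTop (𝓝 0)) :
    Tendsto (fun k => ∫ ω, ‖f k ω‖ ∂P) atTop (𝓝 0) := by
  rw [Metric.tendsto_atTop] at h ⊢
  intro ε hε
  obtain ⟨N, hN⟩ := h (ε ^ 2 / 2) (by positivity)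
  refine ⟨N, fun k hk => ?_⟩
  have hsq : Integrable (fun ω => ‖f k ω‖ ^ 2) P :=
    (memLp_two_iff_integrable_sq_norm (hf k).1).mp (hf k)
  have h1 : Integrable (fun ω => ‖f k ω‖) P :=
    (memLp_one_iff_integrable.mp ((hf k).mono_exponent one_le_two)).norm
  have hadd : Integrable (fun ω => (ε ^ 2 + ‖f k ω‖ ^ 2) / (2 * ε)) P := by
    apply Integrable.div_const
    exact (integrable_const _).add hsq
  have hmono : ∫ ω, ‖f k ω‖ ∂P ≤ ∫ ω, (ε ^ 2 + ‖f k ω‖ ^ 2) / (2 * ε) ∂P := by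
    refine integral_mono h1 hadd fun ω => ?_
    rw [le_div_iff₀ (by positivity)]
    nlinarith [sq_nonneg (‖f k ω‖ - ε)]
  rw [integral_div, integral_add (integrable_const _) hsq, integral_const,
    probReal_univ, one_smul] at hmono
  have hpos : (0:ℝ) ≤ ∫ ω, ‖f k ω‖ ∂P := integral_nonneg fun ω => norm_nonneg _
  rw [Real.dist_eq, sub_zero, abs_of_nonneg hpos]
  have hd := hN k hk
  rw [Real.dist_eq, sub_zero, abs_lt] at hd
  refine lt_of_le_of_lt hmono ?_
  rw [div_lt_iff₀ (by positivity)]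
  nlinarith [hd.2, sq_nonneg ε]

/-- Passing the linearized expected terminal constraint to the limit: if
`E[g(X_k) + ∂g/∂x(X_k)(Y_{k+1} - X_k)] = 0` for all `k`, `E[‖X_k - X‖²] → 0` and
`E[‖Y_k - X‖²] → 0`, with `g` of class `C¹`, bounded with bounded derivative and
globally Lipschitz, then `E[g(X)] = 0`. -/
theorem stmt_16 {Ω : Type*} [MeasurableSpace Ω] (P : Measure Ω) [IsProbabilityMeasure P]
    (n q : ℕ) (g : EuclideanSpace ℝ (Fin n) → EuclideanSpace ℝ (Fin q))
    (hg : ContDiff ℝ 1 g) (Cg : ℝ)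
    (hgb : ∀ x, ‖g x‖ ≤ Cg) (hdgb : ∀ x, ‖fderiv ℝ g x‖ ≤ Cg)
    (L : NNReal) (hgl : LipschitzWith L g)
    (X : ℕ → Ω → EuclideanSpace ℝ (Fin n)) (Xlim : Ω → EuclideanSpace ℝ (Fin n))
    (Y : ℕ → Ω → EuclideanSpace ℝ (Fin n))
    (hX2 : ∀ k, MemLp (X k) 2 P) (hXl2 : MemLp Xlim 2 P) (hY2 : ∀ k, MemLp (Y k) 2 P)
    (hXconv : Tendsto (fun k => ∫ ω, ‖X k ω - Xlim ω‖ ^ 2 ∂P) atTop (𝓝 0))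
    (hYconv : Tendsto (fun k => ∫ ω, ‖Y k ω - Xlim ω‖ ^ 2 ∂P) atTop (𝓝 0))
    (hlin : ∀ k, ∫ ω, (g (X k ω) + fderiv ℝ g (X k ω) (Y (k + 1) ω - X k ω)) ∂P = 0) :
    ∫ ω, g (Xlim ω) ∂P = 0 := by
  have hCg : 0 ≤ Cg := le_trans (norm_nonneg _) (hgb 0)
  -- integrability helpers
  have hint1 : ∀ (f : Ω → EuclideanSpace ℝ (Fin n)), MemLp f 2 P → Integrable f P :=
    fun f hf => memLp_one_iff_integrable.mp (hf.mono_exponent one_le_two)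
  have hgXl : Integrable (fun ω => g (Xlim ω)) P :=
    (integrable_const Cg).mono' (hg.continuous.comp_aestronglyMeasurable hXl2.1)
      (Filter.Eventually.of_forall fun ω => hgb _)
  have hgXk : ∀ k, Integrable (fun ω => g (X k ω)) P := fun k =>
    (integrable_const Cg).mono' (hg.continuous.comp_aestronglyMeasurable (hX2 k).1)
      (Filter.Eventually.of_forall fun ω => hgb _)
  have hvInt : ∀ k, Integrable (fun ω => Y (k + 1) ω - X k ω) P := fun k =>
    (hint1 _ (hY2 (k + 1))).sub (hint1 _ (hX2 k))
  have htermAesm : ∀ k, AEStronglyMeasurable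
      (fun ω => fderiv ℝ g (X k ω) (Y (k + 1) ω - X k ω)) P := by
    intro k
    have hA : AEStronglyMeasurable (fun ω => fderiv ℝ g (X k ω)) P :=
      (hg.continuous_fderiv one_ne_zero).comp_aestronglyMeasurable (hX2 k).1
    have hv : AEStronglyMeasurable (fun ω => Y (k + 1) ω - X k ω) P := (hvInt k).1
    exact isBoundedBilinearMap_apply.continuous.comp_aestronglyMeasurable (hA.prodMk hv)
  have htermInt : ∀ k, Integrable
      (fun ω => fderiv ℝ g (X k ω) (Y (k + 1) ω - X k ω)) P := by
    intro k
    refine (((hvInt k).norm.const_mul Cg)).mono' (htermAesm k)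
      (Filter.Eventually.of_forall fun ω => ?_)
    calc ‖fderiv ℝ g (X k ω) (Y (k + 1) ω - X k ω)‖
        ≤ ‖fderiv ℝ g (X k ω)‖ * ‖Y (k + 1) ω - X k ω‖ :=
          (fderiv ℝ g (X k ω)).le_opNorm _
      _ ≤ Cg * ‖Y (k + 1) ω - X k ω‖ := by
          gcongr; exact hdgb _
  -- L¹ convergences
  have hA : Tendsto (fun k => ∫ ω, ‖X k ω - Xlim ω‖ ∂P) atTop (𝓝 0) :=
    tendsto_int_norm_of_sq P (fun k ω => X k ω - Xlim ω)
      (fun k => (hX2 k).sub hXl2) hXconv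
  have hC0 : Tendsto (fun k => ∫ ω, ‖Y k ω - Xlim ω‖ ∂P) atTop (𝓝 0) :=
    tendsto_int_norm_of_sq P (fun k ω => Y k ω - Xlim ω)
      (fun k => (hY2 k).sub hXl2) hYconv
  have hC : Tendsto (fun k => ∫ ω, ‖Y (k + 1) ω - Xlim ω‖ ∂P) atTop (𝓝 0) :=
    hC0.comp (tendsto_add_atTop_nat 1)
  have hnormInt : ∀ (f : Ω → EuclideanSpace ℝ (Fin n)), MemLp f 2 P →
      Integrable (fun ω => ‖f ω‖) P := fun f hf => (hint1 f hf).norm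
  -- the key bound for each k
  have key : ∀ k, ‖∫ ω, g (Xlim ω) ∂P‖ ≤
      (L : ℝ) * ∫ ω, ‖X k ω - Xlim ω‖ ∂P +
      Cg * ((∫ ω, ‖Y (k + 1) ω - Xlim ω‖ ∂P) + ∫ ω, ‖X k ω - Xlim ω‖ ∂P) := by
    intro k
    have hsum : Integrable
        (fun ω => g (X k ω) + fderiv ℝ g (X k ω) (Y (k + 1) ω - X k ω)) P :=
      (hgXk k).add (htermInt k)
    have e1 : ∫ ω, g (Xlim ω) ∂P =
        ∫ ω, (g (Xlim ω) - (g (X k ω) + fderiv ℝ g (X k ω) (Y (k + 1) ω - X k ω))) ∂P := by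
      rw [integral_sub hgXl hsum, hlin k, sub_zero]
    have hXsub : Integrable (fun ω => ‖X k ω - Xlim ω‖) P :=
      hnormInt _ ((hX2 k).sub hXl2)
    have hYsub : Integrable (fun ω => ‖Y (k + 1) ω - Xlim ω‖) P :=
      hnormInt _ ((hY2 (k + 1)).sub hXl2)
    have hYX : Integrable (fun ω => ‖Y (k + 1) ω - Xlim ω‖ + ‖X k ω - Xlim ω‖) P :=
      hYsub.add hXsub
    have hbInt : Integrable (fun ω => (L : ℝ) * ‖X k ω - Xlim ω‖ +
        Cg * (‖Y (k + 1) ω - Xlim ω‖ + ‖X k ω - Xlim ω‖)) P :=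
      (hXsub.const_mul _).add (hYX.const_mul _)
    calc ‖∫ ω, g (Xlim ω) ∂P‖
        = ‖∫ ω, (g (Xlim ω) - (g (X k ω) + fderiv ℝ g (X k ω) (Y (k + 1) ω - X k ω))) ∂P‖ := by
          rw [← e1]
      _ ≤ ∫ ω, ‖g (Xlim ω) - (g (X k ω) + fderiv ℝ g (X k ω) (Y (k + 1) ω - X k ω))‖ ∂P :=
          norm_integral_le_integral_norm _
      _ ≤ ∫ ω, ((L : ℝ) * ‖X k ω - Xlim ω‖ +
            Cg * (‖Y (k + 1) ω - Xlim ω‖ + ‖X k ω - Xlim ω‖)) ∂P := by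
          refine integral_mono (hgXl.sub hsum).norm hbInt fun ω => ?_
          have t1 : ‖g (Xlim ω) - g (X k ω)‖ ≤ (L : ℝ) * ‖X k ω - Xlim ω‖ := by
            rw [norm_sub_rev]
            simpa [dist_eq_norm] using hgl.dist_le_mul (X k ω) (Xlim ω)
          have t2 : ‖fderiv ℝ g (X k ω) (Y (k + 1) ω - X k ω)‖ ≤
              Cg * (‖Y (k + 1) ω - Xlim ω‖ + ‖X k ω - Xlim ω‖) := by
            calc ‖fderiv ℝ g (X k ω) (Y (k + 1) ω - X k ω)‖
                ≤ ‖fderiv ℝ g (X k ω)‖ * ‖Y (k + 1) ω - X k ω‖ :=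
                  (fderiv ℝ g (X k ω)).le_opNorm _
              _ ≤ Cg * ‖Y (k + 1) ω - X k ω‖ := by gcongr; exact hdgb _
              _ ≤ Cg * (‖Y (k + 1) ω - Xlim ω‖ + ‖X k ω - Xlim ω‖) := by
                  gcongr
                  calc ‖Y (k + 1) ω - X k ω‖
                      = ‖(Y (k + 1) ω - Xlim ω) - (X k ω - Xlim ω)‖ := by abel_nf
                    _ ≤ ‖Y (k + 1) ω - Xlim ω‖ + ‖X k ω - Xlim ω‖ := norm_sub_le _ _
          calc ‖g (Xlim ω) - (g (X k ω) + fderiv ℝ g (X k ω) (Y (k + 1) ω - X k ω))‖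
              ≤ ‖g (Xlim ω) - g (X k ω)‖ + ‖fderiv ℝ g (X k ω) (Y (k + 1) ω - X k ω)‖ := by
                rw [sub_add_eq_sub_sub]; exact norm_sub_le _ _
            _ ≤ _ := add_le_add t1 t2
      _ = (L : ℝ) * ∫ ω, ‖X k ω - Xlim ω‖ ∂P +
            Cg * ((∫ ω, ‖Y (k + 1) ω - Xlim ω‖ ∂P) + ∫ ω, ‖X k ω - Xlim ω‖ ∂P) := by
          rw [integral_add (hXsub.const_mul _) (hYX.const_mul _),
            integral_const_mul, integral_const_mul, integral_add hYsub hXsub]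
  -- pass to the limit
  have hB : Tendsto (fun k => (L : ℝ) * ∫ ω, ‖X k ω - Xlim ω‖ ∂P +
      Cg * ((∫ ω, ‖Y (k + 1) ω - Xlim ω‖ ∂P) + ∫ ω, ‖X k ω - Xlim ω‖ ∂P))
      atTop (𝓝 0) := by
    have := (hA.const_mul (L : ℝ)).add ((hC.add hA).const_mul Cg)
    simpa using this
  have h0 : ‖∫ ω, g (Xlim ω) ∂P‖ ≤ 0 :=
    ge_of_tendsto hB (Filter.Eventually.of_forall key)
  simpa using norm_le_zero_iff.mp h0
end
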